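/- For all integers 0 ≤ k ≤ j, the following identity holds in ℚ(q, a): ∑_{x=0}^{j−k} (−q)^x a^{2x} q^{−4jx + 2kx + x²} [j−k; x]_+ · (a² q^{2−2j}; q²)_{j−k−x} · (q^{2+2j−2k−2x}; q²)_x = (a² q^{2−4j+2k}; q²)_{j−k}. -/

import Mathlib

noncomputable section
open Finset

abbrev F : Type := FractionRing (MvPolynomial (Fin 2) ℚ)
def q : F := algebraMap (MvPolynomial (Fin 2) ℚ) F (MvPolynomial.X 0)
def a : F := algebraMap (MvPolynomial (Fin 2) ℚ) F (MvPolynomial.X 1)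
def qPoch (x y : F) (n : ℕ) : F := ∏ i ∈ Finset.range n, (1 - x * y ^ i)
def qp (m : ℕ) : F := qPoch (q ^ 2) (q ^ 2) m
def qbin (N k : ℕ) : F := qp N / (qp k * qp (N - k))

lemma q_ne_zero : q ≠ 0 := by
  have hinj := IsFractionRing.injective (MvPolynomial (Fin 2) ℚ) F
  intro h0
  have : (MvPolynomial.X 0 : MvPolynomial (Fin 2) ℚ) = 0 := by
    apply hinj; rw [map_zero]; exact h0
  exact MvPolynomial.X_ne_zero 0 this

lemma q_pow_ne_one (n : ℕ) (hn : n ≠ 0) : q ^ n ≠ 1 := by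
  intro h
  have hinj := IsFractionRing.injective (MvPolynomial (Fin 2) ℚ) F
  have h2 : (MvPolynomial.X 0 : MvPolynomial (Fin 2) ℚ) ^ n = 1 := by
    apply hinj; rw [map_pow, map_one]; exact h
  have h3 := congrArg (MvPolynomial.eval (fun _ => (2:ℚ))) h2
  simp at h3
  have : (1:ℚ) < 2 ^ n := one_lt_pow₀ (by norm_num) hn
  rw [h3] at this; norm_num at this

lemma one_sub_q_pow_ne_zero (n : ℕ) (hn : n ≠ 0) : (1 : F) - q ^ n ≠ 0 := by
  intro h
  exact q_pow_ne_one n hn (by linear_combination -h)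

lemma qPoch_succ (x y : F) (n : ℕ) : qPoch x y (n+1) = qPoch x y n * (1 - x * y ^ n) :=
  Finset.prod_range_succ _ _

lemma qPoch_succ' (x y : F) (n : ℕ) : qPoch x y (n+1) = (1 - x) * qPoch (x*y) y n := by
  unfold qPoch
  rw [Finset.prod_range_succ', pow_zero, mul_one, mul_comm]
  congr 1
  exact Finset.prod_congr rfl fun i _ => by ring

lemma qp_succ (n : ℕ) : qp (n+1) = qp n * (1 - q ^ (2*n+2)) := by
  rw [qp, qPoch_succ]
  congr 2
  rw [← pow_mul, ← pow_add]
  ring_nf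

lemma qp_ne_zero (m : ℕ) : qp m ≠ 0 := by
  induction m with
  | zero => simp [qp, qPoch]
  | succ n ih =>
    rw [qp_succ]
    exact mul_ne_zero ih (one_sub_q_pow_ne_zero _ (by omega))

lemma qp_split (s t : ℕ) : qp (s + t) = qp s * qPoch (q ^ (2*s+2)) (q^2) t := by
  unfold qp qPoch
  rw [Finset.prod_range_add]
  congr 1
  exact Finset.prod_congr rfl fun i _ => by rw [pow_add]; ring

def fterm (b : F) (m t : ℕ) : F :=
  (-1)^t * b^t * q ^ ((t:ℤ)^2 - t - 2*m*t) * (qp m)^2 / (qp t * (qp (m-t))^2) * qPoch b (q^2) (m-t)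

def gterm (b : F) (n t : ℕ) : F :=
  fterm b n t * (q^(2*t) - 1) * (q^(2*t) - q^(4*n)) / ((1 - q^(2*n))^2 * q^(2*t))

set_option maxHeartbeats 2000000 in
lemma WZstep (b : F) (t s : ℕ) :
    fterm b (t+s+1) t - (1 - b * (q ^ (2*(t+s+1)))⁻¹) * fterm b (t+s) t =
      gterm b (t+s+1) (t+1) - gterm b (t+s+1) t := by
  rw [gterm, gterm]
  have h1 : fterm b (t+s+1) t =
      (-1)^t * b^t * q ^ ((t:ℤ)^2 - t - 2*((t+s+1:ℕ):ℤ)*t) * (qp (t+s))^2 *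
        (1 - q^(2*(t+s)+2))^2 * qPoch b (q^2) s * (1 - b*(q^2)^s) /
        (qp t * (qp s)^2 * (1 - q^(2*s+2))^2) := by
    rw [fterm, show t+s+1-t = s+1 from by omega, qp_succ (t+s), qp_succ s, qPoch_succ]
    ring
  have h2 : fterm b (t+s) t =
      (-1)^t * b^t * q ^ ((t:ℤ)^2 - t - 2*((t+s:ℕ):ℤ)*t) * (qp (t+s))^2 *
        qPoch b (q^2) s / (qp t * (qp s)^2) := by
    rw [fterm, show t+s-t = s from by omega]
    ring
  have h3 : fterm b (t+s+1) (t+1) =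
      (-1)^(t+1) * b^(t+1) * q ^ (((t+1:ℕ):ℤ)^2 - ((t+1:ℕ):ℤ) - 2*((t+s+1:ℕ):ℤ)*((t+1:ℕ):ℤ)) *
        (qp (t+s))^2 * (1 - q^(2*(t+s)+2))^2 * qPoch b (q^2) s /
        (qp t * (1 - q^(2*t+2)) * (qp s)^2) := by
    rw [fterm, show t+s+1-(t+1) = s from by omega, qp_succ (t+s), qp_succ t]
    ring
  have hq2 : q ^ ((t:ℤ)^2 - t - 2*((t+s:ℕ):ℤ)*t) =
      q ^ ((t:ℤ)^2 - t - 2*((t+s+1:ℕ):ℤ)*t) * q ^ (2*t) := by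
    rw [← zpow_natCast q (2*t), ← zpow_add₀ q_ne_zero]
    congr 1; push_cast; ring
  have hq3 : q ^ (((t+1:ℕ):ℤ)^2 - ((t+1:ℕ):ℤ) - 2*((t+s+1:ℕ):ℤ)*((t+1:ℕ):ℤ)) =
      q ^ ((t:ℤ)^2 - t - 2*((t+s+1:ℕ):ℤ)*t) * q ^ (2*t) / q ^ (2*(t+s+1)) := by
    rw [eq_div_iff (pow_ne_zero _ q_ne_zero), ← zpow_natCast q (2*t),
      ← zpow_natCast q (2*(t+s+1)), ← zpow_add₀ q_ne_zero, ← zpow_add₀ q_ne_zero]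
    congr 1; push_cast; ring
  have hc : (1:F) - b * (q ^ (2*(t+s+1)))⁻¹ = (q ^ (2*(t+s+1)) - b) / q ^ (2*(t+s+1)) := by
    rw [sub_div, div_self (pow_ne_zero _ q_ne_zero), div_eq_mul_inv]
  have e1 : q^(2*(t+s)+2) = q^(2*t)*(q^(2*s)*q^2) := by
    rw [show 2*(t+s)+2 = 2*t+(2*s+2) from by ring, pow_add, pow_add]
  have e2 : q^(2*s+2) = q^(2*s)*q^2 := by rw [← pow_add]
  have e3 : q^(2*t+2) = q^(2*t)*q^2 := by rw [← pow_add]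
  have e4 : q^(2*(t+1)) = q^(2*t)*q^2 := by
    rw [show 2*(t+1) = 2*t+2 from by ring, pow_add]
  have e5 : q^(4*(t+s+1)) = (q^(2*t)*(q^(2*s)*q^2))^2 := by
    rw [show 4*(t+s+1) = (2*t+(2*s+2))*2 from by ring, pow_mul, pow_add, pow_add]
  have e6 : q^(2*(t+s+1)) = q^(2*t)*(q^(2*s)*q^2) := by
    rw [show 2*(t+s+1) = 2*t+(2*s+2) from by ring, pow_add, pow_add]
  have e7 : ((q:F)^2)^s = q^(2*s) := by rw [← pow_mul]
  rw [h1, h2, h3, hq2, hq3, hc, e1, e2, e3, e4, e5, e6, e7]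
  have n1 := qp_ne_zero t
  have n2 := qp_ne_zero s
  have n3 := qp_ne_zero (t+s)
  have n4 : (1:F) - q^(2*s+2) ≠ 0 := one_sub_q_pow_ne_zero _ (by omega)
  have n5 : (1:F) - q^(2*t+2) ≠ 0 := one_sub_q_pow_ne_zero _ (by omega)
  have n6 : (1:F) - q^(2*(t+s)+2) ≠ 0 := one_sub_q_pow_ne_zero _ (by omega)
  have n7 : (1:F) - q^(2*(t+s+1)) ≠ 0 := one_sub_q_pow_ne_zero _ (by omega)
  have n8 : (q:F) ≠ 0 := q_ne_zero
  rw [e2] at n4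
  rw [e3] at n5
  rw [e6] at n7
  have hu0 : (q:F)^(2*t) ≠ 0 := pow_ne_zero _ q_ne_zero
  have hv0 : (q:F)^(2*s) ≠ 0 := pow_ne_zero _ q_ne_zero
  have hw0 : (q:F)^2 ≠ 0 := pow_ne_zero _ q_ne_zero
  have hY0 : q ^ ((t:ℤ)^2 - t - 2*((t+s+1:ℕ):ℤ)*t) ≠ 0 := zpow_ne_zero _ q_ne_zero
  set P := qPoch b (q^2) s with hP
  clear_value P
  set A := qp t with hA
  clear_value A
  set B := qp s with hB
  clear_value B
  set N := qp (t+s) with hN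
  clear_value N
  set Y := q ^ ((t:ℤ)^2 - t - 2*((t+s+1:ℕ):ℤ)*t) with hYd
  clear_value Y
  set u := q^(2*t) with hud
  clear_value u
  set v := q^(2*s) with hvd
  clear_value v
  set w := (q:F)^2 with hwd
  clear_value w
  simp only [div_mul_eq_mul_div, mul_div_assoc', div_div, div_mul_div_comm]
  have hL1 : A * B^2 * ((1:F) - v*w)^2 ≠ 0 := by
    exact mul_ne_zero (mul_ne_zero n1 (pow_ne_zero _ n2)) (pow_ne_zero _ n4)
  have hL2 : u * (v*w) * (A * B^2) ≠ 0 := by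
    exact mul_ne_zero (mul_ne_zero hu0 (mul_ne_zero hv0 hw0)) (mul_ne_zero n1 (pow_ne_zero _ n2))
  have hR1 : u * (v*w) * (A*((1:F) - u*w)*B^2) * (((1:F) - u*(v*w))^2*(u*w)) ≠ 0 := by
    exact mul_ne_zero (mul_ne_zero (mul_ne_zero hu0 (mul_ne_zero hv0 hw0))
      (mul_ne_zero (mul_ne_zero n1 n5) (pow_ne_zero _ n2))) (mul_ne_zero (pow_ne_zero _ n7) (mul_ne_zero hu0 hw0))
  have hR2 : A * B^2 * ((1:F) - v*w)^2 * (((1:F) - u*(v*w))^2*u) ≠ 0 := by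
    exact mul_ne_zero (mul_ne_zero (mul_ne_zero n1 (pow_ne_zero _ n2)) (pow_ne_zero _ n4))
      (mul_ne_zero (pow_ne_zero _ n7) hu0)
  rw [div_sub_div _ _ hL1 hL2, div_sub_div _ _ hR1 hR2,
    div_eq_div_iff (mul_ne_zero hL1 hL2) (mul_ne_zero hR1 hR2)]
  ring

set_option maxHeartbeats 1000000 in
lemma key (m : ℕ) (b : F) :
    ∑ t ∈ Finset.range (m+1), fterm b m t = qPoch (b * q ^ (-2*(m:ℤ))) (q^2) m := by
  induction m with
  | zero =>
      rw [Finset.sum_range_one]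
      simp [fterm, qp, qPoch]
  | succ m ih =>
      have hq2n : (q:F)^(2*(m+1)) ≠ 0 := pow_ne_zero _ q_ne_zero
      have h7 : (1:F) - q^(2*(m+1)) ≠ 0 := one_sub_q_pow_ne_zero _ (by omega)
      have htel : ∑ t ∈ Finset.range (m+1),
            (fterm b (m+1) t - (1 - b * (q ^ (2*(m+1)))⁻¹) * fterm b m t)
          = gterm b (m+1) (m+1) - gterm b (m+1) 0 := by
        rw [← Finset.sum_range_sub (gterm b (m+1)) (m+1)]
        refine Finset.sum_congr rfl fun t ht => ?_
        simp only [Finset.mem_range] at ht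
        obtain ⟨s, rfl⟩ : ∃ s, m = t + s := ⟨m - t, by omega⟩
        exact WZstep b t s
      have hgn : gterm b (m+1) (m+1) = - fterm b (m+1) (m+1) := by
        rw [gterm, show 4*(m+1) = 2*(m+1)+2*(m+1) from by ring, pow_add,
          div_eq_iff (mul_ne_zero (pow_ne_zero 2 h7) hq2n)]
        ring
      have hg0 : gterm b (m+1) 0 = 0 := by simp [gterm]
      rw [Finset.sum_range_succ]
      have hsum : ∑ t ∈ Finset.range (m+1), fterm b (m+1) t
          = (1 - b * (q ^ (2*(m+1)))⁻¹) * ∑ t ∈ Finset.range (m+1), fterm b m t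
            - fterm b (m+1) (m+1) := by
        rw [Finset.sum_sub_distrib, ← Finset.mul_sum, hgn, hg0, sub_zero] at htel
        linear_combination htel
      rw [hsum, ih]
      have c2 : (1:F) - b * q ^ (-2*((m+1:ℕ):ℤ)) = 1 - b * (q^(2*(m+1)))⁻¹ := by
        have he : (-2*((m+1:ℕ):ℤ)) = -(((2*(m+1):ℕ)):ℤ) := by push_cast; ring
        rw [he, zpow_neg, zpow_natCast]
      have c1 : b * q ^ (-2*((m+1:ℕ):ℤ)) * q^2 = b * q ^ (-2*(m:ℤ)) := by
        rw [mul_assoc]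
        congr 1
        rw [← zpow_natCast q 2, ← zpow_add₀ q_ne_zero]
        congr 1
        push_cast; ring
      have hstep : qPoch (b * q ^ (-2*((m+1:ℕ):ℤ))) (q^2) (m+1)
          = (1 - b * (q ^ (2*(m+1)))⁻¹) * qPoch (b * q ^ (-2*(m:ℤ))) (q^2) m := by
        rw [qPoch_succ', c1, c2]
      rw [hstep]
      ring

/-- The key summation `L = (a²q^{2−4j+2k};q²)_{j−k}` from the proof of Lemma `lemmaclosure2`. -/
theorem closure_TRI_key_sum (j k : ℕ) (hk : k ≤ j) :
    ∑ t ∈ Finset.range (j - k + 1),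
      (-q) ^ t * a ^ (2 * t) *
        q ^ (-4 * (j : ℤ) * (t : ℤ) + 2 * (k : ℤ) * (t : ℤ) + (t : ℤ) ^ 2) *
        qbin (j - k) t *
        qPoch (a ^ 2 * q ^ (2 - 2 * (j : ℤ))) (q ^ 2) (j - k - t) *
        qPoch (q ^ (2 + 2 * (j : ℤ) - 2 * (k : ℤ) - 2 * (t : ℤ))) (q ^ 2) t =
      qPoch (a ^ 2 * q ^ (2 - 4 * (j : ℤ) + 2 * (k : ℤ))) (q ^ 2) (j - k) := by
  have hRHS : qPoch (a ^ 2 * q ^ (2 - 4 * (j:ℤ) + 2 * (k:ℤ))) (q^2) (j-k)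
      = qPoch ((a^2 * q ^ (2 - 2*(j:ℤ))) * q ^ (-2*((j-k:ℕ):ℤ))) (q^2) (j-k) := by
    congr 1
    rw [mul_assoc, ← zpow_add₀ q_ne_zero]
    congr 1
    push_cast [Nat.cast_sub hk]
    ring
  rw [hRHS, ← key (j-k) (a^2 * q ^ (2 - 2*(j:ℤ)))]
  refine Finset.sum_congr rfl fun t ht => ?_
  simp only [Finset.mem_range] at ht
  have hW : qPoch (q ^ ((2:ℤ) + 2*(j:ℤ) - 2*(k:ℤ) - 2*(t:ℤ))) (q^2) t
      = qPoch (q^(2*(j-k-t)+2 : ℕ)) (q^2) t := by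
    congr 1
    rw [← zpow_natCast q (2*(j-k-t)+2)]
    congr 1
    omega
  have h5 : qp (j-k) = qp (j-k-t) * qPoch (q^(2*(j-k-t)+2 : ℕ)) (q^2) t := by
    have h := qp_split (j-k-t) t
    rwa [show j-k-t+t = j-k from by omega] at h
  have e : (q:F)^t * q ^ (-4*(j:ℤ)*(t:ℤ) + 2*(k:ℤ)*(t:ℤ) + (t:ℤ)^2)
      = (q ^ ((2:ℤ) - 2*(j:ℤ)))^t * q ^ ((t:ℤ)^2 - (t:ℤ) - 2*((j-k:ℕ):ℤ)*(t:ℤ)) := by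
    rw [← zpow_natCast (q ^ ((2:ℤ) - 2*(j:ℤ))) t, ← zpow_mul, ← zpow_natCast q t,
      ← zpow_add₀ q_ne_zero, ← zpow_add₀ q_ne_zero]
    congr 1
    push_cast [Nat.cast_sub hk]
    ring
  rw [hW, qbin, fterm, h5, neg_pow, mul_pow (a^2) (q ^ ((2:ℤ) - 2*(j:ℤ))) t, ← pow_mul a 2 t]
  have hB := qp_ne_zero (j-k-t)
  have hA := qp_ne_zero t
  simp only [div_mul_eq_mul_div, mul_div_assoc', div_div]
  rw [div_eq_div_iff (mul_ne_zero hA hB) (mul_ne_zero hA (pow_ne_zero 2 hB))]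
  linear_combination ((-1)^t * a^(2*t) * qp t * qp (j-k-t)^3 *
    (qPoch (q^(2*(j-k-t)+2 : ℕ)) (q^2) t)^2 *
    qPoch (a^2 * q ^ ((2:ℤ) - 2*(j:ℤ))) (q^2) (j-k-t)) * e
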